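/- arXiv:2408.14671 — 3 statements merged into one kernel-verified Lean document; each statement's English description precedes it below -/
import Mathlib

section
/- Under the measurement-error model, the naive (uncorrected) score evaluated at the true parameters has nonzero expectation given explicitly by E[(Y − D·θ0 − Z'β0)(D − Z'γ0)] = τ0·β0'γ0. In particular, whenever β0'γ0 ≠ 0 the naive score fails the moment condition E[φ(W; θ0, η0)] = 0. -/
open MeasureTheory

private lemma integrable_mul_L2 {Ω : Type*} [MeasurableSpace Ω] {μ : Measure Ω}
    {f g : Ω → ℝ} (hf : MemLp f 2 μ) (hg : MemLp g 2 μ) :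
    Integrable (fun ω => f ω * g ω) μ := by
  rw [← memLp_one_iff_integrable]
  have h := hg.smul (r := 1) hf (hpqr := ⟨by
    simp [ENNReal.inv_two_add_inv_two]⟩)
  simpa [Pi.smul_apply, smul_eq_mul, Pi.mul_def] using h

/-- Under the measurement-error model, the naive (uncorrected) score
evaluated at the true parameters has nonzero expectation:
`E[(Y − D·θ0 − Z'β0)(D − Z'γ0)] = τ0·β0'γ0`.  In particular, whenever `β0'γ0 ≠ 0`
the naive score fails the moment condition. -/
theorem naive_score_fails_moment_condition
    {Ω : Type*} [MeasurableSpace Ω] {μ : Measure Ω} [IsProbabilityMeasure μ]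
    {p : ℕ} (Y D U V : Ω → ℝ) (X A Z : Ω → Fin p → ℝ)
    (θ0 τ0 : ℝ) (β0 γ0 : Fin p → ℝ)
    (hτ0 : 0 < τ0)
    (hY : ∀ ω, Y ω = θ0 * D ω + (∑ j, β0 j * X ω j) + U ω)
    (hD : ∀ ω, D ω = (∑ j, γ0 j * X ω j) + V ω)
    (hZ : ∀ ω j, Z ω j = X ω j + A ω j)
    -- square integrability of all the random variables involved
    (hL2Y : MemLp Y 2 μ) (hL2D : MemLp D 2 μ)
    (hL2U : MemLp U 2 μ) (hL2V : MemLp V 2 μ)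
    (hL2X : ∀ j, MemLp (fun ω => X ω j) 2 μ)
    (hL2A : ∀ j, MemLp (fun ω => A ω j) 2 μ)
    -- measurement-error moments: E[A] = 0 and E[AA'] = τ0 I
    (hA0 : ∀ j, ∫ ω, A ω j ∂μ = 0)
    (hAA : ∀ j k, ∫ ω, A ω j * A ω k ∂μ = if j = k then τ0 else 0)
    -- orthogonality moment conditions
    (hUV : ∫ ω, U ω * V ω ∂μ = 0)
    (hUX : ∀ j, ∫ ω, U ω * X ω j ∂μ = 0)
    (hVX : ∀ j, ∫ ω, V ω * X ω j ∂μ = 0)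
    (hUA : ∀ j, ∫ ω, U ω * A ω j ∂μ = 0)
    (hVA : ∀ j, ∫ ω, V ω * A ω j ∂μ = 0)
    (hDA : ∀ j, ∫ ω, D ω * A ω j ∂μ = 0)
    (hXA : ∀ j k, ∫ ω, X ω j * A ω k ∂μ = 0) :
    (∫ ω, (Y ω - D ω * θ0 - ∑ j, β0 j * Z ω j) * (D ω - ∑ j, γ0 j * Z ω j) ∂μ
        = τ0 * ∑ j, β0 j * γ0 j) ∧
    ((∑ j, β0 j * γ0 j) ≠ 0 →
      ∫ ω, (Y ω - D ω * θ0 - ∑ j, β0 j * Z ω j) * (D ω - ∑ j, γ0 j * Z ω j) ∂μ ≠ 0) := by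
  -- abbreviations
  set f : Ω → ℝ := fun ω => ∑ j, β0 j * A ω j with hf
  set g : Ω → ℝ := fun ω => ∑ j, γ0 j * A ω j with hg
  have hL2f : MemLp f 2 μ :=
    memLp_finset_sum _ (fun j _ => (hL2A j).const_mul (β0 j))
  have hL2g : MemLp g 2 μ :=
    memLp_finset_sum _ (fun j _ => (hL2A j).const_mul (γ0 j))
  -- pointwise identity
  have key : ∀ ω, (Y ω - D ω * θ0 - ∑ j, β0 j * Z ω j) * (D ω - ∑ j, γ0 j * Z ω j)
      = U ω * V ω - U ω * g ω - f ω * V ω + f ω * g ω := by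
    intro ω
    have h1 : Y ω - D ω * θ0 - ∑ j, β0 j * Z ω j = U ω - f ω := by
      simp only [hY ω, hf]
      simp only [hZ, mul_add, Finset.sum_add_distrib]
      ring
    have h2 : D ω - ∑ j, γ0 j * Z ω j = V ω - g ω := by
      rw [hD ω]
      simp only [hg, hZ, mul_add, Finset.sum_add_distrib]
      ring
    rw [h1, h2]; ring
  -- integrabilities
  have iUV : Integrable (fun ω => U ω * V ω) μ := integrable_mul_L2 hL2U hL2V
  have iUg : Integrable (fun ω => U ω * g ω) μ := integrable_mul_L2 hL2U hL2g
  have ifV : Integrable (fun ω => f ω * V ω) μ := integrable_mul_L2 hL2f hL2V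
  have ifg : Integrable (fun ω => f ω * g ω) μ := integrable_mul_L2 hL2f hL2g
  -- component integrals
  have hUg : ∫ ω, U ω * g ω ∂μ = 0 := by
    have : ∀ ω, U ω * g ω = ∑ k, γ0 k * (U ω * A ω k) := by
      intro ω; simp only [hg, Finset.mul_sum]; apply Finset.sum_congr rfl; intros; ring
    simp_rw [this]
    rw [integral_finset_sum _ (fun k _ =>
      ((integrable_mul_L2 hL2U (hL2A k)).const_mul (γ0 k)))]
    simp [integral_const_mul, hUA]
  have hfV : ∫ ω, f ω * V ω ∂μ = 0 := by
    have : ∀ ω, f ω * V ω = ∑ j, β0 j * (V ω * A ω j) := by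
      intro ω; simp only [hf, Finset.sum_mul]; apply Finset.sum_congr rfl; intros; ring
    simp_rw [this]
    rw [integral_finset_sum _ (fun j _ =>
      ((integrable_mul_L2 hL2V (hL2A j)).const_mul (β0 j)))]
    simp [integral_const_mul, hVA]
  have hfg : ∫ ω, f ω * g ω ∂μ = τ0 * ∑ j, β0 j * γ0 j := by
    have : ∀ ω, f ω * g ω = ∑ j, ∑ k, (β0 j * γ0 k) * (A ω j * A ω k) := by
      intro ω
      simp only [hf, hg, Finset.sum_mul_sum]
      apply Finset.sum_congr rfl; intros; apply Finset.sum_congr rfl; intros; ring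
    simp_rw [this]
    rw [integral_finset_sum _ (fun j _ => by
      apply integrable_finset_sum
      exact fun k _ => ((integrable_mul_L2 (hL2A j) (hL2A k)).const_mul (β0 j * γ0 k)))]
    have : ∀ j : Fin p, ∫ ω, ∑ k, (β0 j * γ0 k) * (A ω j * A ω k) ∂μ
        = τ0 * (β0 j * γ0 j) := by
      intro j
      rw [integral_finset_sum _ (fun k _ =>
        ((integrable_mul_L2 (hL2A j) (hL2A k)).const_mul (β0 j * γ0 k)))]
      have : ∀ k : Fin p, ∫ ω, (β0 j * γ0 k) * (A ω j * A ω k) ∂μ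
          = (β0 j * γ0 k) * (if j = k then τ0 else 0) := by
        intro k; rw [integral_const_mul, hAA]
      simp_rw [this]
      simp [Finset.sum_ite_eq, mul_comm]
    simp_rw [this]
    rw [← Finset.mul_sum]
  -- assemble
  have main : ∫ ω, (Y ω - D ω * θ0 - ∑ j, β0 j * Z ω j) * (D ω - ∑ j, γ0 j * Z ω j) ∂μ
      = τ0 * ∑ j, β0 j * γ0 j := by
    have iB : Integrable (fun ω => U ω * V ω - U ω * g ω) μ := iUV.sub iUg
    have iA : Integrable (fun ω => U ω * V ω - U ω * g ω - f ω * V ω) μ := iB.sub ifV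
    simp_rw [key]
    rw [integral_add iA ifg, integral_sub iB ifV, integral_sub iUV iUg,
      hUV, hUg, hfV, hfg]
    ring
  exact ⟨main, fun h => by rw [main]; exact mul_ne_zero (ne_of_gt hτ0) h⟩
end

section
/- The error-corrected score satisfies the moment condition at the true parameters: E[ψ(W; θ0, η0)] = E[(Y − D·θ0 − Z'β0)(D − Z'γ0) − τ0·β0'γ0] = 0, where η0 = (β0, γ0, τ0). -/
open MeasureTheory

/-- The error-corrected score satisfies the moment condition at the
true parameters: `E[(Y − D·θ0 − Z'β0)(D − Z'γ0) − τ0·β0'γ0] = 0`. -/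
theorem corrected_score_moment_condition
    {Ω : Type*} [MeasurableSpace Ω] {μ : Measure Ω} [IsProbabilityMeasure μ]
    {p : ℕ} (Y D U V : Ω → ℝ) (X A Z : Ω → Fin p → ℝ)
    (θ0 τ0 : ℝ) (β0 γ0 : Fin p → ℝ)
    (hτ0 : 0 < τ0)
    (hY : ∀ ω, Y ω = θ0 * D ω + (∑ j, β0 j * X ω j) + U ω)
    (hD : ∀ ω, D ω = (∑ j, γ0 j * X ω j) + V ω)
    (hZ : ∀ ω j, Z ω j = X ω j + A ω j)
    -- square integrability of all the random variables involved
    (hL2Y : MemLp Y 2 μ) (hL2D : MemLp D 2 μ)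
    (hL2U : MemLp U 2 μ) (hL2V : MemLp V 2 μ)
    (hL2X : ∀ j, MemLp (fun ω => X ω j) 2 μ)
    (hL2A : ∀ j, MemLp (fun ω => A ω j) 2 μ)
    -- measurement-error moments: E[A] = 0 and E[AA'] = τ0 I
    (hA0 : ∀ j, ∫ ω, A ω j ∂μ = 0)
    (hAA : ∀ j k, ∫ ω, A ω j * A ω k ∂μ = if j = k then τ0 else 0)
    -- orthogonality moment conditions
    (hUV : ∫ ω, U ω * V ω ∂μ = 0)
    (hUX : ∀ j, ∫ ω, U ω * X ω j ∂μ = 0)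
    (hVX : ∀ j, ∫ ω, V ω * X ω j ∂μ = 0)
    (hUA : ∀ j, ∫ ω, U ω * A ω j ∂μ = 0)
    (hVA : ∀ j, ∫ ω, V ω * A ω j ∂μ = 0)
    (hDA : ∀ j, ∫ ω, D ω * A ω j ∂μ = 0)
    (hXA : ∀ j k, ∫ ω, X ω j * A ω k ∂μ = 0) :
    ∫ ω, ((Y ω - D ω * θ0 - ∑ j, β0 j * Z ω j) * (D ω - ∑ j, γ0 j * Z ω j)
        - τ0 * ∑ j, β0 j * γ0 j) ∂μ = 0 := by

  classical
  have hmul : ∀ (f g : Ω → ℝ), MemLp f 2 μ → MemLp g 2 μ →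
      Integrable (fun ω => f ω * g ω) μ := by
    intro f g hf hg
    refine ((hf.integrable_sq.add hg.integrable_sq).div_const 2).mono'
      (hf.aestronglyMeasurable.mul hg.aestronglyMeasurable)
      (Filter.Eventually.of_forall fun ω => ?_)
    simp only [Pi.add_apply, Real.norm_eq_abs, abs_mul]
    nlinarith [sq_nonneg (|f ω| - |g ω|), sq_abs (f ω), sq_abs (g ω),
      abs_nonneg (f ω), abs_nonneg (g ω)]
  -- pointwise rewrite of the integrand
  have hpt : ∀ ω, ((Y ω - D ω * θ0 - ∑ j, β0 j * Z ω j) * (D ω - ∑ j, γ0 j * Z ω j)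
        - τ0 * ∑ j, β0 j * γ0 j)
      = U ω * V ω - (∑ j, γ0 j * (U ω * A ω j)) - (∑ j, β0 j * (V ω * A ω j))
        + (∑ j, ∑ k, (β0 j * γ0 k) * (A ω j * A ω k)) - τ0 * ∑ j, β0 j * γ0 j := by
    intro ω
    have h1 : Y ω - D ω * θ0 - ∑ j, β0 j * Z ω j = U ω - ∑ j, β0 j * A ω j := by
      simp only [hY, hZ, mul_add, Finset.sum_add_distrib]; ring
    have h2 : D ω - ∑ j, γ0 j * Z ω j = V ω - ∑ j, γ0 j * A ω j := by
      simp only [hD, hZ, mul_add, Finset.sum_add_distrib]; ring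
    rw [h1, h2]
    have hUS : U ω * ∑ j, γ0 j * A ω j = ∑ j, γ0 j * (U ω * A ω j) := by
      rw [Finset.mul_sum]; exact Finset.sum_congr rfl fun j _ => by ring
    have hVS : (∑ j, β0 j * A ω j) * V ω = ∑ j, β0 j * (V ω * A ω j) := by
      rw [Finset.sum_mul]; exact Finset.sum_congr rfl fun j _ => by ring
    have hSS : (∑ j, β0 j * A ω j) * (∑ k, γ0 k * A ω k)
        = ∑ j, ∑ k, (β0 j * γ0 k) * (A ω j * A ω k) := by
      rw [Finset.sum_mul_sum]
      exact Finset.sum_congr rfl fun j _ => Finset.sum_congr rfl fun k _ => by ring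
    have : (U ω - ∑ j, β0 j * A ω j) * (V ω - ∑ j, γ0 j * A ω j)
        = U ω * V ω - U ω * (∑ j, γ0 j * A ω j) - (∑ j, β0 j * A ω j) * V ω
          + (∑ j, β0 j * A ω j) * (∑ k, γ0 k * A ω k) := by ring
    rw [this, hUS, hVS, hSS]
  rw [integral_congr_ae (Filter.Eventually.of_forall hpt)]
  -- integrability of the pieces
  have iUV : Integrable (fun ω => U ω * V ω) μ := hmul _ _ hL2U hL2V
  have iS2 : Integrable (fun ω => ∑ j, γ0 j * (U ω * A ω j)) μ :=
    integrable_finset_sum _ fun j _ => (hmul _ _ hL2U (hL2A j)).const_mul _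
  have iS3 : Integrable (fun ω => ∑ j, β0 j * (V ω * A ω j)) μ :=
    integrable_finset_sum _ fun j _ => (hmul _ _ hL2V (hL2A j)).const_mul _
  have iS4 : Integrable (fun ω => ∑ j, ∑ k, (β0 j * γ0 k) * (A ω j * A ω k)) μ :=
    integrable_finset_sum _ fun j _ =>
      integrable_finset_sum _ fun k _ => (hmul _ _ (hL2A j) (hL2A k)).const_mul _
  have iC : Integrable (fun _ : Ω => τ0 * ∑ j, β0 j * γ0 j) μ := integrable_const _
  have i1 : Integrable (fun ω => U ω * V ω - ∑ j, γ0 j * (U ω * A ω j)) μ := iUV.sub iS2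
  have i2 : Integrable (fun ω => U ω * V ω - (∑ j, γ0 j * (U ω * A ω j))
      - ∑ j, β0 j * (V ω * A ω j)) μ := i1.sub iS3
  have i3 : Integrable (fun ω => U ω * V ω - (∑ j, γ0 j * (U ω * A ω j))
      - (∑ j, β0 j * (V ω * A ω j))
      + ∑ j, ∑ k, (β0 j * γ0 k) * (A ω j * A ω k)) μ := i2.add iS4
  rw [integral_sub i3 iC, integral_add i2 iS4,
    integral_sub i1 iS3, integral_sub iUV iS2,
    integral_finset_sum _ (fun j _ => (hmul _ _ hL2U (hL2A j)).const_mul _),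
    integral_finset_sum _ (fun j _ => (hmul _ _ hL2V (hL2A j)).const_mul _),
    integral_finset_sum _ (fun j _ =>
      integrable_finset_sum _ fun k _ => (hmul _ _ (hL2A j) (hL2A k)).const_mul _)]
  have hS2 : (∑ j, ∫ ω, γ0 j * (U ω * A ω j) ∂μ) = 0 := by
    refine Finset.sum_eq_zero fun j _ => ?_
    rw [integral_const_mul, hUA j, mul_zero]
  have hS3 : (∑ j, ∫ ω, β0 j * (V ω * A ω j) ∂μ) = 0 := by
    refine Finset.sum_eq_zero fun j _ => ?_
    rw [integral_const_mul, hVA j, mul_zero]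
  have hS4 : (∑ j, ∫ ω, ∑ k, (β0 j * γ0 k) * (A ω j * A ω k) ∂μ)
      = τ0 * ∑ j, β0 j * γ0 j := by
    have : ∀ j : Fin p, (∫ ω, ∑ k, (β0 j * γ0 k) * (A ω j * A ω k) ∂μ)
        = τ0 * (β0 j * γ0 j) := by
      intro j
      rw [integral_finset_sum _ (fun k _ => (hmul _ _ (hL2A j) (hL2A k)).const_mul _)]
      have : ∀ k : Fin p, (∫ ω, (β0 j * γ0 k) * (A ω j * A ω k) ∂μ)
          = if j = k then β0 j * γ0 j * τ0 else 0 := by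
        intro k
        rw [integral_const_mul, hAA j k]
        split_ifs with h
        · subst h; ring
        · ring
      rw [Finset.sum_congr rfl fun k _ => this k, Finset.sum_ite_eq]
      simp [mul_comm, mul_assoc, mul_left_comm]
    rw [Finset.sum_congr rfl fun j _ => this j, ← Finset.mul_sum]
  rw [hUV, hS2, hS3, hS4, integral_const]
  simp
end

section
/- The gradient of the expected error-corrected score with respect to β vanishes at the true parameters; explicitly, as a vector identity in ℝ^p, E[(D − Z'γ0)·Z] + τ0·γ0 = 0. -/
open MeasureTheory

/-- The gradient of the expected error-corrected score with respect to β
vanishes at the true parameters: as a vector identity in ℝ^p,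
`E[(D − Z'γ0)·Z] + τ0·γ0 = 0`. -/
theorem corrected_score_beta_gradient_vanishes
    {Ω : Type*} [MeasurableSpace Ω] {μ : Measure Ω} [IsProbabilityMeasure μ]
    {p : ℕ} (Y D U V : Ω → ℝ) (X A Z : Ω → Fin p → ℝ)
    (θ0 τ0 : ℝ) (β0 γ0 : Fin p → ℝ)
    (hτ0 : 0 < τ0)
    (hY : ∀ ω, Y ω = θ0 * D ω + (∑ j, β0 j * X ω j) + U ω)
    (hD : ∀ ω, D ω = (∑ j, γ0 j * X ω j) + V ω)
    (hZ : ∀ ω j, Z ω j = X ω j + A ω j)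
    -- square integrability of all the random variables involved
    (hL2Y : MemLp Y 2 μ) (hL2D : MemLp D 2 μ)
    (hL2U : MemLp U 2 μ) (hL2V : MemLp V 2 μ)
    (hL2X : ∀ j, MemLp (fun ω => X ω j) 2 μ)
    (hL2A : ∀ j, MemLp (fun ω => A ω j) 2 μ)
    -- measurement-error moments: E[A] = 0 and E[AA'] = τ0 I
    (hA0 : ∀ j, ∫ ω, A ω j ∂μ = 0)
    (hAA : ∀ j k, ∫ ω, A ω j * A ω k ∂μ = if j = k then τ0 else 0)
    -- orthogonality moment conditions
    (hUV : ∫ ω, U ω * V ω ∂μ = 0)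
    (hUX : ∀ j, ∫ ω, U ω * X ω j ∂μ = 0)
    (hVX : ∀ j, ∫ ω, V ω * X ω j ∂μ = 0)
    (hUA : ∀ j, ∫ ω, U ω * A ω j ∂μ = 0)
    (hVA : ∀ j, ∫ ω, V ω * A ω j ∂μ = 0)
    (hDA : ∀ j, ∫ ω, D ω * A ω j ∂μ = 0)
    (hXA : ∀ j k, ∫ ω, X ω j * A ω k ∂μ = 0) :
    ∀ j, (∫ ω, (D ω - ∑ k, γ0 k * Z ω k) * Z ω j ∂μ) + τ0 * γ0 j = 0 := by
  intro j
  have intMul : ∀ (f g : Ω → ℝ), MemLp f 2 μ → MemLp g 2 μ →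
      Integrable (fun ω => f ω * g ω) μ := by
    intro f g hf hg
    have h := hg.smul (r := 1) hf (hpqr := ⟨by norm_num [ENNReal.inv_two_add_inv_two]⟩)
    rw [memLp_one_iff_integrable] at h
    simpa [smul_eq_mul, mul_comm, Pi.mul_def] using h
  -- pointwise rewrite
  have key : ∀ ω, (D ω - ∑ k, γ0 k * Z ω k) * Z ω j =
      V ω * X ω j + V ω * A ω j
        - (∑ k, γ0 k * (X ω j * A ω k)) - (∑ k, γ0 k * (A ω k * A ω j)) := by
    intro ω
    simp only [hD, hZ]
    rw [show (∑ k, γ0 k * (X ω k + A ω k)) = (∑ k, γ0 k * X ω k) + ∑ k, γ0 k * A ω k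
        from by rw [← Finset.sum_add_distrib]; exact Finset.sum_congr rfl fun k _ => by ring]
    rw [show (∑ k, γ0 k * (X ω j * A ω k)) = X ω j * ∑ k, γ0 k * A ω k
        from by rw [Finset.mul_sum]; exact Finset.sum_congr rfl fun k _ => by ring]
    rw [show (∑ k, γ0 k * (A ω k * A ω j)) = (∑ k, γ0 k * A ω k) * A ω j
        from by rw [Finset.sum_mul]; exact Finset.sum_congr rfl fun k _ => by ring]
    ring
  rw [integral_congr_ae (Filter.Eventually.of_forall key)]
  have i1 : Integrable (fun ω => V ω * X ω j) μ := intMul _ _ hL2V (hL2X j)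
  have i2 : Integrable (fun ω => V ω * A ω j) μ := intMul _ _ hL2V (hL2A j)
  have i3 : Integrable (fun ω => ∑ k, γ0 k * (X ω j * A ω k)) μ :=
    integrable_finset_sum _ fun k _ => ((intMul _ _ (hL2X j) (hL2A k)).const_mul _)
  have i4 : Integrable (fun ω => ∑ k, γ0 k * (A ω k * A ω j)) μ :=
    integrable_finset_sum _ fun k _ => ((intMul _ _ (hL2A k) (hL2A j)).const_mul _)
  have i12 : Integrable (fun ω => V ω * X ω j + V ω * A ω j) μ := i1.add i2
  have i123 : Integrable
      (fun ω => V ω * X ω j + V ω * A ω j - ∑ k, γ0 k * (X ω j * A ω k)) μ := i12.sub i3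
  rw [integral_sub i123 i4, integral_sub i12 i3, integral_add i1 i2,
      integral_finset_sum _ (fun k _ => (intMul _ _ (hL2X j) (hL2A k)).const_mul _),
      integral_finset_sum _ (fun k _ => (intMul _ _ (hL2A k) (hL2A j)).const_mul _)]
  simp only [integral_const_mul, hVX, hVA, hXA, hAA, mul_zero, add_zero,
    Finset.sum_const_zero, sub_zero, zero_sub, mul_ite]
  rw [mul_comm τ0 (γ0 j)]
  simp [Finset.sum_ite_eq, mul_comm]
end
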